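/- For every n ≥ 4, the prefix of the golden string S of length F_n equals the substring of S occupying positions F_n + 1 through 2F_n (inclusive). -/

import Mathlib

/-- The finite golden strings: `gs 1 = [B]`, `gs 2 = [B, A]`, `gs n = gs (n-1) ++ gs (n-2)`.
Here `true` denotes the letter B and `false` denotes the letter A. -/
def gs : ℕ → List Bool
  | 0 => []
  | 1 => [true]
  | 2 => [true, false]
  | (n+3) => gs (n+2) ++ gs (n+1)

/-- The `i`-th letter (1-indexed) of the infinite golden string `S`;
`true` = B, `false` = A.  Since `gs n` is a prefix of `gs (n+1)` and
`(gs (i+1)).length = F (i+2) ≥ i`, this is well-defined. -/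
def goldenLetter (i : ℕ) : Bool := (gs (i+1)).getD (i-1) true

/-- `s` is the (index set of the) Zeckendorf decomposition of `n`:
a set of indices `≥ 2`, no two adjacent, with `n = ∑_{i ∈ s} F i`. -/
def IsZeck (n : ℕ) (s : Finset ℕ) : Prop :=
  (∀ i ∈ s, 2 ≤ i) ∧ (∀ i ∈ s, i + 1 ∉ s) ∧ n = ∑ i ∈ s, Nat.fib i

/-- `c` is the coefficient function of the Chung–Graham decomposition of `n`:
`n = ∑_{i ≥ 1} c i * F (2i)` with `c i ∈ {0,1,2}` and a coefficient `0`
strictly between any two coefficients equal to `2`. -/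
def IsCG (n : ℕ) (c : ℕ →₀ ℕ) : Prop :=
  (∀ i, c i ≤ 2) ∧ c 0 = 0 ∧
  (∀ i₁ i₂, i₁ < i₂ → c i₁ = 2 → c i₂ = 2 → ∃ j, i₁ < j ∧ j < i₂ ∧ c j = 0) ∧
  n = c.sum (fun i a => a * Nat.fib (2 * i))

/-- `n` has `F (2k)` as the smallest summand of its Zeckendorf decomposition. -/
def ZeckMin (k n : ℕ) : Prop :=
  ∃ s : Finset ℕ, IsZeck n s ∧ 2 * k ∈ s ∧ ∀ i ∈ s, 2 * k ≤ i

/-- `n` has `F (2k)` or `2 F (2k)` as the smallest summand of its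
Chung–Graham decomposition. -/
def CGMin (k n : ℕ) : Prop :=
  ∃ c : ℕ →₀ ℕ, IsCG n c ∧ 1 ≤ c k ∧ ∀ i < k, c i = 0

theorem gs_length : ∀ n, (gs (n+1)).length = Nat.fib (n+2)
  | 0 => rfl
  | 1 => rfl
  | (n+2) => by
      have h1 : (gs (n+2)).length = Nat.fib (n+3) := gs_length (n+1)
      have h2 : (gs (n+1)).length = Nat.fib (n+2) := gs_length n
      have h3 : Nat.fib (n+4) = Nat.fib (n+2) + Nat.fib (n+3) := Nat.fib_add_two
      show (gs (n+2) ++ gs (n+1)).length = Nat.fib (n+4)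
      rw [List.length_append]
      omega

theorem gs_prefix_succ (n : ℕ) : gs n <+: gs (n+1) := by
  match n with
  | 0 => exact ⟨gs 1, rfl⟩
  | 1 => exact ⟨[false], rfl⟩
  | (n+2) => exact ⟨gs (n+1), rfl⟩

theorem gs_prefix_le {a b : ℕ} (h : a ≤ b) : gs a <+: gs b := by
  induction b with
  | zero => simp [Nat.le_zero.mp h]
  | succ b ih =>
    rcases Nat.lt_or_ge a (b+1) with h' | h'
    · exact (ih (by omega)).trans (gs_prefix_succ b)
    · have : a = b + 1 := by omega
      subst this; exact List.prefix_refl _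

theorem lt_fib_add_two : ∀ i : ℕ, i < Nat.fib (i+2)
  | 0 => by decide
  | (i+1) => by
      have h1 : i < Nat.fib (i+2) := lt_fib_add_two i
      have h2 : Nat.fib (i+3) = Nat.fib (i+1) + Nat.fib (i+2) := Nat.fib_add_two
      have h3 : 0 < Nat.fib (i+1) := Nat.fib_pos.mpr (by omega)
      show i + 1 < Nat.fib (i+3)
      omega

theorem goldenLetter_eq (i m : ℕ) (h1 : 1 ≤ i) (h2 : i ≤ (gs m).length) :
    goldenLetter i = (gs m).getD (i-1) true := by
  unfold goldenLetter
  have hgl : (gs (i+1)).length = Nat.fib (i+2) := gs_length i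
  have hlen : i - 1 < (gs (i+1)).length := by
    have := lt_fib_add_two i; omega
  have hlen' : i - 1 < (gs m).length := by omega
  rw [List.getD_eq_getElem _ _ hlen, List.getD_eq_getElem _ _ hlen']
  rcases le_total (i+1) m with h | h
  · exact (gs_prefix_le h).getElem hlen
  · exact ((gs_prefix_le h).getElem hlen').symm

theorem lemmaA (k : ℕ) : ∃ t, gs (k+2) ++ gs (k+3) = gs (k+3) ++ t := by
  match k with
  | 0 => exact ⟨[false, true], by decide⟩
  | (j+1) =>
    refine ⟨gs (j+1) ++ gs (j+2), ?_⟩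
    show gs (j+3) ++ gs (j+4) = gs (j+4) ++ (gs (j+1) ++ gs (j+2))
    simp only [gs, List.append_assoc]

theorem golden_repeat_block (n : ℕ) (hn : 4 ≤ n) :
    ∀ i : ℕ, 1 ≤ i → i ≤ Nat.fib n →
      goldenLetter (Nat.fib n + i) = goldenLetter i := by
  obtain ⟨k, rfl⟩ : ∃ k, n = k + 4 := ⟨n - 4, by omega⟩
  intro i hi1 hi2
  obtain ⟨t, ht⟩ := lemmaA k
  have hdecomp : gs (k+5) = gs (k+3) ++ (gs (k+3) ++ t) := by
    have h : gs (k+5) = gs (k+3) ++ (gs (k+2) ++ gs (k+3)) := by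
      show gs (k+4) ++ gs (k+3) = _
      show (gs (k+3) ++ gs (k+2)) ++ gs (k+3) = _
      simp [List.append_assoc]
    rw [h, ht]
  have hL : (gs (k+3)).length = Nat.fib (k+4) := gs_length (k+2)
  have hlen5 : (gs (k+5)).length = Nat.fib (k+6) := gs_length (k+4)
  have hmono : Nat.fib (k+4) ≤ Nat.fib (k+5) := Nat.fib_mono (by omega)
  have hfib6 : Nat.fib (k+6) = Nat.fib (k+4) + Nat.fib (k+5) := Nat.fib_add_two
  have h2fib : Nat.fib (k+4) + i ≤ (gs (k+5)).length := by
    rw [hlen5]; omega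
  rw [goldenLetter_eq _ (k+5) (by omega) h2fib,
      goldenLetter_eq i (k+3) hi1 (by rw [hL]; exact hi2),
      hdecomp]
  have hidx : Nat.fib (k+4) + i - 1 = (gs (k+3)).length + (i - 1) := by omega
  rw [hidx, List.getD_append_right _ _ _ _ (Nat.le_add_right _ _), Nat.add_sub_cancel_left,
      List.getD_append _ _ _ _ (by omega)]
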